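/- For every nonzero real number λ and all integers m, n ≥ 0, the degenerate harmonic numbers satisfy C(m+n, n) · H_{n+m,λ} = ∑_{k=0}^{n} H_{k,λ} · C(m+n-k-1, n-k) + H_{m,λ} · binom(m+n-λ, n), as an identity of real numbers. -/

import Mathlib

/-- The generalized binomial coefficient `binom(x, k) = x(x-1)⋯(x-k+1)/k!`
for a real number `x` and a natural number `k`. -/
noncomputable def genBinom (x : ℝ) (k : ℕ) : ℝ :=
  (∏ i ∈ Finset.range k, (x - i)) / (k.factorial : ℝ)

/-- The degenerate harmonic numbers: `H_{0,λ} = 0` and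
`H_{n,λ} = ∑_{k=1}^{n} binom(λ-1, k-1) ⬝ (-1)^{k-1} / k` for `n ≥ 1`. -/
noncomputable def degHarmonic (lam : ℝ) (n : ℕ) : ℝ :=
  ∑ k ∈ Finset.Icc 1 n, genBinom (lam - 1) (k - 1) * (-1 : ℝ) ^ (k - 1) / (k : ℝ)

open Finset

private lemma gb_zero (x : ℝ) : genBinom x 0 = 1 := by simp [genBinom]

private lemma fact_ne (k : ℕ) : (k.factorial : ℝ) ≠ 0 := by
  exact_mod_cast k.factorial_ne_zero

private lemma gb_succ (x : ℝ) (k : ℕ) :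
    genBinom x (k + 1) = genBinom x k * (x - k) / (k + 1) := by
  have h1 := fact_ne k
  have h2 : ((k : ℝ) + 1) ≠ 0 := by positivity
  unfold genBinom
  rw [Finset.prod_range_succ, Nat.factorial_succ]
  push_cast
  rw [div_mul_eq_mul_div, div_div]
  rw [mul_comm ((k : ℝ) + 1) (k.factorial : ℝ)]

private lemma gb_succ_mul (x : ℝ) (k : ℕ) :
    ((k : ℝ) + 1) * genBinom x (k + 1) = (x - k) * genBinom x k := by
  have h2 : ((k : ℝ) + 1) ≠ 0 := by positivity
  rw [gb_succ]
  field_simp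

private lemma prod_neg_flip (g : ℕ → ℝ) (n : ℕ) :
    ∏ i ∈ Finset.range n, (-(g i)) = (-1) ^ n * ∏ i ∈ Finset.range n, g i := by
  calc ∏ i ∈ Finset.range n, (-(g i)) = ∏ i ∈ Finset.range n, ((-1) * g i) := by
        refine Finset.prod_congr rfl fun i _ => by ring
    _ = (-1) ^ n * ∏ i ∈ Finset.range n, g i := by
        rw [Finset.prod_mul_distrib, Finset.prod_const, Finset.card_range]

private lemma gb_reflect (x : ℝ) (n : ℕ) :
    genBinom ((n : ℝ) - 1 - x) n = (-1) ^ n * genBinom x n := by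
  unfold genBinom
  have h1 : ∏ i ∈ Finset.range n, ((n : ℝ) - 1 - x - i)
      = ∏ i ∈ Finset.range n, ((i : ℝ) - x) := by
    rw [← Finset.prod_range_reflect (fun i => ((i : ℝ) - x)) n]
    refine Finset.prod_congr rfl fun i hi => ?_
    have hi' : i < n := Finset.mem_range.mp hi
    have hc : ((n - 1 - i : ℕ) : ℝ) = (n : ℝ) - 1 - i := by
      rw [Nat.cast_sub (by omega : i ≤ n - 1), Nat.cast_sub (by omega : 1 ≤ n)]
      push_cast
      ring
    rw [hc]
    ring
  have h2 : ∏ i ∈ Finset.range n, ((i : ℝ) - x)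
      = (-1) ^ n * ∏ i ∈ Finset.range n, (x - i) := by
    calc ∏ i ∈ Finset.range n, ((i : ℝ) - x)
        = ∏ i ∈ Finset.range n, (-(x - (i : ℝ))) :=
          Finset.prod_congr rfl fun i _ => by ring
      _ = (-1) ^ n * ∏ i ∈ Finset.range n, (x - i) := prod_neg_flip _ n
  rw [h1, h2, mul_div_assoc]

private lemma cast_choose_eq (m i : ℕ) :
    ((m + i - 1).choose i : ℝ) * i.factorial = ∏ t ∈ Finset.range i, ((m : ℝ) + t) := by
  induction i with
  | zero => simp
  | succ i ih =>
    rw [Finset.prod_range_succ, ← ih]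
    have hnat : (m + (i + 1) - 1).choose (i + 1) * (i + 1) = (m + i - 1).choose i * (m + i) := by
      rcases Nat.eq_zero_or_pos m with hm | hm
      · subst hm
        rcases Nat.eq_zero_or_pos i with hi | hi
        · subst hi; simp
        · have h1 : (0 + (i + 1) - 1) = i := by omega
          have h2 : i.choose (i + 1) = 0 := Nat.choose_eq_zero_of_lt (by omega)
          have h3 : (0 + i - 1).choose i = 0 := Nat.choose_eq_zero_of_lt (by omega)
          rw [h1, h2, h3]; ring
      · have h1 : m + (i + 1) - 1 = (m + i - 1) + 1 := by omega
        have h2 : (m + i - 1) + 1 = m + i := by omega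
        rw [h1, ← Nat.add_one_mul_choose_eq]
        have h3 : (m + i - 1).succ = m + i := by omega
        rw [h2]
        ring
    have hcast : ((m + (i + 1) - 1).choose (i + 1) : ℝ) * ((i : ℝ) + 1)
        = ((m + i - 1).choose i : ℝ) * ((m : ℝ) + i) := by exact_mod_cast hnat
    rw [Nat.factorial_succ]
    push_cast
    nlinarith [hcast, (fact_ne i)]

private lemma cast_choose (m i : ℕ) :
    ((m + i - 1).choose i : ℝ) = (-1) ^ i * genBinom (-(m : ℝ)) i := by
  have h := cast_choose_eq m i
  have hsq : ((-1 : ℝ)) ^ i * (-1 : ℝ) ^ i = 1 := by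
    rw [← pow_add, ← two_mul, pow_mul]; norm_num
  unfold genBinom
  have h2 : ∏ t ∈ Finset.range i, (-(m : ℝ) - t)
      = (-1) ^ i * ∏ t ∈ Finset.range i, ((m : ℝ) + t) := by
    calc ∏ t ∈ Finset.range i, (-(m : ℝ) - t)
        = ∏ t ∈ Finset.range i, (-(((m : ℝ)) + t)) := by
          refine Finset.prod_congr rfl fun t _ => by ring
      _ = (-1) ^ i * ∏ t ∈ Finset.range i, ((m : ℝ) + t) := prod_neg_flip _ i
  rw [h2, ← h, mul_div_assoc, ← mul_assoc, hsq, one_mul,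
    mul_div_assoc, div_self (fact_ne i), mul_one]

private lemma gb_vandermonde (x y : ℝ) (n : ℕ) :
    ∑ k ∈ Finset.range (n + 1), genBinom x k * genBinom y (n - k) = genBinom (x + y) n := by
  induction n with
  | zero => simp [gb_zero]
  | succ n ih =>
    have hn : ((n : ℝ) + 1) ≠ 0 := by positivity
    apply mul_left_cancel₀ hn
    have hR : ((n : ℝ) + 1) * genBinom (x + y) (n + 1) = (x + y - n) * genBinom (x + y) n :=
      gb_succ_mul _ n
    rw [hR, ← ih, Finset.mul_sum, Finset.mul_sum]
    have hsplit : ∀ k ∈ Finset.range (n + 2),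
        ((n : ℝ) + 1) * (genBinom x k * genBinom y (n + 1 - k))
          = (k : ℝ) * (genBinom x k * genBinom y (n + 1 - k))
            + ((n + 1 - k : ℕ) : ℝ) * (genBinom x k * genBinom y (n + 1 - k)) := by
      intro k hk
      have hk' : k ≤ n + 1 := by
        have := Finset.mem_range.mp hk; omega
      have : ((n + 1 - k : ℕ) : ℝ) = (n : ℝ) + 1 - k := by
        rw [Nat.cast_sub hk']; push_cast; ring
      rw [this]; ring
    rw [Finset.sum_congr rfl hsplit, Finset.sum_add_distrib]
    have hS1 : ∑ k ∈ Finset.range (n + 2), (k : ℝ) * (genBinom x k * genBinom y (n + 1 - k))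
        = ∑ k ∈ Finset.range (n + 1), (x - k) * genBinom x k * genBinom y (n - k) := by
      rw [Finset.sum_range_succ']
      simp only [Nat.cast_zero, zero_mul, add_zero]
      refine Finset.sum_congr rfl fun i hi => ?_
      have h1 : n + 1 - (i + 1) = n - i := by omega
      have h2 : ((i : ℝ) + 1) * genBinom x (i + 1) = (x - i) * genBinom x i := gb_succ_mul x i
      rw [h1]
      push_cast
      calc ((i : ℝ) + 1) * (genBinom x (i + 1) * genBinom y (n - i))
          = (((i : ℝ) + 1) * genBinom x (i + 1)) * genBinom y (n - i) := by ring
        _ = (x - i) * genBinom x i * genBinom y (n - i) := by rw [h2]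
    have hS2 : ∑ k ∈ Finset.range (n + 2),
          ((n + 1 - k : ℕ) : ℝ) * (genBinom x k * genBinom y (n + 1 - k))
        = ∑ k ∈ Finset.range (n + 1), (y - ((n - k : ℕ) : ℝ)) * genBinom x k * genBinom y (n - k) := by
      rw [Finset.sum_range_succ]
      simp only [Nat.sub_self, Nat.cast_zero, zero_mul, add_zero]
      refine Finset.sum_congr rfl fun k hk => ?_
      have hk' : k ≤ n := by have := Finset.mem_range.mp hk; omega
      have h1 : n + 1 - k = (n - k) + 1 := by omega
      have h2 : (((n - k : ℕ) : ℝ) + 1) * genBinom y ((n - k) + 1)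
          = (y - ((n - k : ℕ) : ℝ)) * genBinom y (n - k) := gb_succ_mul y (n - k)
      rw [h1]
      have h3 : (((n - k) + 1 : ℕ) : ℝ) = ((n - k : ℕ) : ℝ) + 1 := by push_cast; ring
      rw [h3]
      calc (((n - k : ℕ) : ℝ) + 1) * (genBinom x k * genBinom y ((n - k) + 1))
          = genBinom x k * ((((n - k : ℕ) : ℝ) + 1) * genBinom y ((n - k) + 1)) := by ring
        _ = genBinom x k * ((y - ((n - k : ℕ) : ℝ)) * genBinom y (n - k)) := by rw [h2]
        _ = (y - ((n - k : ℕ) : ℝ)) * genBinom x k * genBinom y (n - k) := by ring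
    rw [hS1, hS2]
    refine Eq.trans Finset.sum_add_distrib.symm (Finset.sum_congr rfl fun k hk => ?_)
    have hk' : k ≤ n := by have := Finset.mem_range.mp hk; omega
    have hc : ((n - k : ℕ) : ℝ) = (n : ℝ) - k := by rw [Nat.cast_sub hk']
    rw [hc]
    ring

/-- `d j = binom (j - λ) j`, reflected form. -/
private lemma d_eq (lam : ℝ) (j : ℕ) :
    genBinom ((j : ℝ) - lam) j = (-1) ^ j * genBinom (lam - 1) j := by
  have h := gb_reflect (lam - 1) j
  have : (j : ℝ) - 1 - (lam - 1) = (j : ℝ) - lam := by ring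
  rwa [this] at h

private lemma degHarmonic_range (lam : ℝ) (k : ℕ) :
    degHarmonic lam k = ∑ j ∈ Finset.range k, genBinom (lam - 1) j * (-1 : ℝ) ^ j / ((j : ℝ) + 1) := by
  unfold degHarmonic
  rw [← Finset.Ico_add_one_right_eq_Icc, Finset.sum_Ico_eq_sum_range]
  refine Finset.sum_congr (by simp) fun j _ => ?_
  have h1 : 1 + j - 1 = j := by omega
  rw [h1]
  push_cast
  ring

private lemma lam_a (lam : ℝ) (j : ℕ) :
    lam * (genBinom (lam - 1) j * (-1 : ℝ) ^ j / ((j : ℝ) + 1))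
      = genBinom ((j : ℝ) - lam) j - genBinom (((j : ℕ) + 1 : ℝ) - lam) (j + 1) := by
  have h1 : (((j : ℕ) + 1 : ℝ)) = (((j + 1 : ℕ)) : ℝ) := by push_cast; ring
  rw [h1, d_eq, d_eq, gb_succ]
  have h2 : ((j : ℝ) + 1) ≠ 0 := by positivity
  field_simp
  push_cast
  ring

/-- `λ H_m = 1 - binom (m - λ) m`. -/
private lemma lam_H (lam : ℝ) (m : ℕ) :
    lam * degHarmonic lam m = 1 - genBinom ((m : ℝ) - lam) m := by
  induction m with
  | zero => simp [degHarmonic, gb_zero]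
  | succ m ih =>
    rw [degHarmonic_range, Finset.sum_range_succ, ← degHarmonic_range, mul_add, ih, lam_a]
    push_cast
    ring

/-- Hockey stick in `ℕ`. -/
private lemma hockey (m N : ℕ) :
    ∑ i ∈ Finset.range (N + 1), (m + i - 1).choose i = (m + N).choose N := by
  induction N with
  | zero => simp
  | succ N ih =>
    rw [Finset.sum_range_succ, ih]
    have h1 : m + (N + 1) - 1 = m + N := by omega
    rw [h1, ← Nat.choose_succ_succ]
    rfl

private lemma chooseInnerSum (m n j : ℕ) (hj : j < n) :
    ∑ k ∈ Finset.Icc (j + 1) n, (m + n - k - 1).choose (n - k)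
      = (m + n - j - 1).choose (n - j - 1) := by
  rw [← Finset.Ico_add_one_right_eq_Icc, Finset.sum_Ico_eq_sum_range]
  have hN : n + 1 - (j + 1) = (n - j - 1) + 1 := by omega
  rw [hN]
  set N := n - j - 1 with hNdef
  have hstep : ∀ i ∈ Finset.range (N + 1),
      (m + n - (j + 1 + i) - 1).choose (n - (j + 1 + i))
        = (m + (N - i) - 1).choose (N - i) := by
    intro i hi
    have hi' : i ≤ N := by have := Finset.mem_range.mp hi; omega
    have e1 : m + n - (j + 1 + i) - 1 = m + (N - i) - 1 := by omega
    have e2 : n - (j + 1 + i) = N - i := by omega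
    rw [e1, e2]
  rw [Finset.sum_congr rfl hstep]
  have hrefl := Finset.sum_range_reflect (fun i => (m + i - 1).choose i) (N + 1)
  simp only [Nat.add_sub_cancel] at hrefl
  rw [hrefl, hockey m N]
  congr 1
  omega

private lemma swap_sum (lam : ℝ) (m n : ℕ) :
    ∑ k ∈ Finset.range (n + 1), degHarmonic lam k * ((m + n - k - 1).choose (n - k) : ℝ)
      = ∑ j ∈ Finset.range n, (genBinom (lam - 1) j * (-1 : ℝ) ^ j / ((j : ℝ) + 1))
          * ((m + n - j - 1).choose (n - j - 1) : ℝ) := by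
  have h1 : ∀ k ∈ Finset.range (n + 1),
      degHarmonic lam k * ((m + n - k - 1).choose (n - k) : ℝ)
        = ∑ j ∈ Finset.range (n + 1),
            (if j < k then (genBinom (lam - 1) j * (-1 : ℝ) ^ j / ((j : ℝ) + 1))
              * ((m + n - k - 1).choose (n - k) : ℝ) else 0) := by
    intro k hk
    have hk' : k ≤ n := by have := Finset.mem_range.mp hk; omega
    have hfil : Finset.range k = Finset.filter (fun j => j < k) (Finset.range (n + 1)) := by
      ext j
      simp only [Finset.mem_filter, Finset.mem_range]
      omega
    rw [degHarmonic_range, Finset.sum_mul, hfil, Finset.sum_filter]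
  rw [Finset.sum_congr rfl h1, Finset.sum_comm]
  have h2 : ∀ j ∈ Finset.range (n + 1),
      ∑ k ∈ Finset.range (n + 1),
          (if j < k then (genBinom (lam - 1) j * (-1 : ℝ) ^ j / ((j : ℝ) + 1))
            * ((m + n - k - 1).choose (n - k) : ℝ) else 0)
        = (genBinom (lam - 1) j * (-1 : ℝ) ^ j / ((j : ℝ) + 1))
            * ∑ k ∈ Finset.Icc (j + 1) n, ((m + n - k - 1).choose (n - k) : ℝ) := by
    intro j hj
    have hfil2 : Finset.filter (fun k => j < k) (Finset.range (n + 1)) = Finset.Icc (j + 1) n := by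
      ext k
      simp only [Finset.mem_filter, Finset.mem_range, Finset.mem_Icc]
      omega
    rw [← Finset.sum_filter, hfil2, Finset.mul_sum]
  rw [Finset.sum_congr rfl h2, Finset.sum_range_succ]
  have hlast : Finset.Icc (n + 1) n = ∅ := by
    apply Finset.Icc_eq_empty; omega
  rw [hlast]
  simp only [Finset.sum_empty, mul_zero, add_zero]
  refine Finset.sum_congr rfl fun j hj => ?_
  have hj' : j < n := Finset.mem_range.mp hj
  congr 1
  rw [← Nat.cast_sum]
  rw [chooseInnerSum m n j hj']

/-- Vandermonde-type identity. -/
private lemma L4 (lam : ℝ) (m n : ℕ) :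
    ∑ j ∈ Finset.range (n + 1), genBinom ((j : ℝ) - lam) j * ((m + n - j - 1).choose (n - j) : ℝ)
      = genBinom ((m : ℝ) + (n : ℝ) - lam) n := by
  have hstep : ∀ j ∈ Finset.range (n + 1),
      genBinom ((j : ℝ) - lam) j * ((m + n - j - 1).choose (n - j) : ℝ)
        = (-1 : ℝ) ^ n * (genBinom (lam - 1) j * genBinom (-(m : ℝ)) (n - j)) := by
    intro j hj
    have hj' : j ≤ n := by have := Finset.mem_range.mp hj; omega
    have e1 : m + n - j - 1 = m + (n - j) - 1 := by omega
    rw [d_eq, e1, cast_choose]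
    have hpow : (-1 : ℝ) ^ j * (-1 : ℝ) ^ (n - j) = (-1 : ℝ) ^ n := by
      rw [← pow_add]
      congr 1
      omega
    calc (-1 : ℝ) ^ j * genBinom (lam - 1) j * ((-1 : ℝ) ^ (n - j) * genBinom (-(m : ℝ)) (n - j))
        = ((-1 : ℝ) ^ j * (-1 : ℝ) ^ (n - j)) * (genBinom (lam - 1) j * genBinom (-(m : ℝ)) (n - j)) := by
          ring
      _ = (-1 : ℝ) ^ n * (genBinom (lam - 1) j * genBinom (-(m : ℝ)) (n - j)) := by rw [hpow]
  rw [Finset.sum_congr rfl hstep, ← Finset.mul_sum, gb_vandermonde]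
  have h := gb_reflect (lam - 1 + -(m : ℝ)) n
  have e2 : (n : ℝ) - 1 - (lam - 1 + -(m : ℝ)) = (m : ℝ) + (n : ℝ) - lam := by ring
  rw [e2] at h
  rw [← h]

/-- Product splitting: `C(m+n,n) ⬝ binom(x, n+m) = binom(x,n) ⬝ binom(x-n, m)`. -/
private lemma L5 (x : ℝ) (m n : ℕ) :
    ((m + n).choose n : ℝ) * genBinom x (n + m) = genBinom x n * genBinom (x - (n : ℝ)) m := by
  unfold genBinom
  rw [Finset.prod_range_add]
  have hfac : ((n + m).factorial : ℝ) = ((m + n).choose n : ℝ) * (n.factorial : ℝ) * (m.factorial : ℝ) := by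
    have h := Nat.add_choose_mul_factorial_mul_factorial m n
    have h2 : (m + n).choose n * n.factorial * m.factorial = (n + m).factorial := by
      have e : (n + m).factorial = (m + n).factorial := by rw [Nat.add_comm]
      rw [e, ← h]
      ring
    exact_mod_cast congrArg (Nat.cast : ℕ → ℝ) h2.symm
  have hprod : ∀ i ∈ Finset.range m, (x - ((n + i : ℕ) : ℝ)) = (x - (n : ℝ) - (i : ℝ)) := by
    intro i _
    push_cast
    ring
  rw [Finset.prod_congr rfl hprod, hfac]
  have h1 := fact_ne n
  have h2 := fact_ne m
  have h3 : ((m + n).choose n : ℝ) ≠ 0 := by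
    exact_mod_cast (Nat.choose_pos (show n ≤ m + n by omega)).ne'
  field_simp

/-- **Recurrence for degenerate harmonic numbers** (Theorem 2.3).
For every nonzero real `λ` and all integers `m, n ≥ 0`,
`C(m+n, n) ⬝ H_{n+m,λ} = ∑_{k=0}^{n} H_{k,λ} ⬝ C(m+n-k-1, n-k) + H_{m,λ} ⬝ binom(m+n-λ, n)`
as real numbers. -/
theorem degHarmonic_recurrence (lam : ℝ) (hlam : lam ≠ 0) (m n : ℕ) :
    ((m + n).choose n : ℝ) * degHarmonic lam (n + m) =
      ∑ k ∈ Finset.range (n + 1), degHarmonic lam k * ((m + n - k - 1).choose (n - k) : ℝ) +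
        degHarmonic lam m * genBinom ((m : ℝ) + (n : ℝ) - lam) n := by
  apply mul_left_cancel₀ hlam
  set B : ℝ := genBinom ((m : ℝ) + (n : ℝ) - lam) n with hB
  set d : ℕ → ℝ := fun j => genBinom ((j : ℝ) - lam) j with hd
  -- LHS
  have hLHS : lam * (((m + n).choose n : ℝ) * degHarmonic lam (n + m))
      = ((m + n).choose n : ℝ) * (1 - d (n + m)) := by
    rw [← mul_assoc, mul_comm lam _, mul_assoc, lam_H]
  -- C * d(n+m) = d m * B
  have hL5 : ((m + n).choose n : ℝ) * d (n + m) = d m * B := by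
    have h := L5 ((m : ℝ) + (n : ℝ) - lam) m n
    have e1 : (((n + m : ℕ)) : ℝ) - lam = (m : ℝ) + (n : ℝ) - lam - 0 := by push_cast; ring
    have e2 : d (n + m) = genBinom ((m : ℝ) + (n : ℝ) - lam) (n + m) := by
      simp only [hd]
      congr 1
      push_cast
      ring
    have e3 : (m : ℝ) + (n : ℝ) - lam - (n : ℝ) = (m : ℝ) - lam := by ring
    rw [e2, h, e3, hB]
    ring
  -- RHS sum
  have hswap : lam * ∑ k ∈ Finset.range (n + 1),
        degHarmonic lam k * ((m + n - k - 1).choose (n - k) : ℝ)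
      = ∑ j ∈ Finset.range n, (d j - d (j + 1)) * ((m + n - j - 1).choose (n - j - 1) : ℝ) := by
    rw [swap_sum, Finset.mul_sum]
    refine Finset.sum_congr rfl fun j hj => ?_
    rw [← mul_assoc, lam_a]
    simp only [hd]
    have : (((j + 1 : ℕ)) : ℝ) = ((j : ℕ) : ℝ) + 1 := by push_cast; ring
    rw [this]
  have hHmB : lam * (degHarmonic lam m * B) = (1 - d m) * B := by
    rw [← mul_assoc, lam_H]
  rw [mul_add, hLHS, hswap, hHmB]
  -- Now the telescoping identity
  have hL4 : B = ∑ j ∈ Finset.range (n + 1), d j * ((m + n - j - 1).choose (n - j) : ℝ) :=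
    (L4 lam m n).symm
  -- goal: C * (1 - d(n+m)) = ∑ (d j - d(j+1)) c1 j + (1 - d m) * B
  have key : (((m + n).choose n : ℝ))
      = ∑ j ∈ Finset.range n, (d j - d (j + 1)) * ((m + n - j - 1).choose (n - j - 1) : ℝ) + B := by
    rw [hL4, Finset.sum_range_succ]
    have hlastc : (m + n - n - 1).choose (n - n) = 1 := by
      simp [Nat.sub_self]
    rw [hlastc, Nat.cast_one]
    set g : ℕ → ℝ := fun j => d j * ((m + n - j).choose (n - j) : ℝ) with hg
    have hterm : ∀ j ∈ Finset.range n,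
        (d j - d (j + 1)) * ((m + n - j - 1).choose (n - j - 1) : ℝ)
          + d j * ((m + n - j - 1).choose (n - j) : ℝ)
        = g j - g (j + 1) := by
      intro j hj
      have hj' : j < n := Finset.mem_range.mp hj
      have hpascal : (m + n - j).choose (n - j)
          = (m + n - j - 1).choose (n - j - 1) + (m + n - j - 1).choose (n - j) := by
        have e1 : m + n - j = (m + n - j - 1) + 1 := by omega
        have e2 : n - j = (n - j - 1) + 1 := by omega
        have hcs := Nat.choose_succ_succ (m + n - j - 1) (n - j - 1)
        simp only [Nat.succ_eq_add_one] at hcs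
        rw [← e1, ← e2] at hcs
        exact hcs
      have e3 : m + n - (j + 1) = m + n - j - 1 := by omega
      have e4 : n - (j + 1) = n - j - 1 := by omega
      have hg1 : g (j + 1) = d (j + 1) * ((m + n - j - 1).choose (n - j - 1) : ℝ) := by
        simp only [hg, e3, e4]
      have hg0 : g j = d j * (((m + n - j - 1).choose (n - j - 1)
          + (m + n - j - 1).choose (n - j) : ℕ) : ℝ) := by
        simp only [hg, hpascal]
      rw [hg1, hg0]
      push_cast
      ring
    have hmerge : ∑ j ∈ Finset.range n,
          (d j - d (j + 1)) * ((m + n - j - 1).choose (n - j - 1) : ℝ)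
        + ∑ j ∈ Finset.range n, d j * ((m + n - j - 1).choose (n - j) : ℝ)
        = ∑ j ∈ Finset.range n, (g j - g (j + 1)) := by
      rw [← Finset.sum_add_distrib]
      exact Finset.sum_congr rfl hterm
    have htel : ∑ j ∈ Finset.range n, (g j - g (j + 1)) = g 0 - g n :=
      Finset.sum_range_sub' g n
    have hg0' : g 0 = ((m + n).choose n : ℝ) := by
      simp only [hg, hd]
      norm_num [gb_zero]
    have hgn' : g n = d n := by
      simp only [hg]
      simp
    have : ∑ j ∈ Finset.range n,
          (d j - d (j + 1)) * ((m + n - j - 1).choose (n - j - 1) : ℝ)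
        + (∑ j ∈ Finset.range n, d j * ((m + n - j - 1).choose (n - j) : ℝ) + d n * 1)
        = ((m + n).choose n : ℝ) := by
      rw [← add_assoc, hmerge, htel, hg0', hgn']
      ring
    exact this.symm
  -- finish
  calc ((m + n).choose n : ℝ) * (1 - d (n + m))
      = ((m + n).choose n : ℝ) - ((m + n).choose n : ℝ) * d (n + m) := by ring
    _ = ((m + n).choose n : ℝ) - d m * B := by rw [hL5]
    _ = (∑ j ∈ Finset.range n, (d j - d (j + 1)) * ((m + n - j - 1).choose (n - j - 1) : ℝ) + B)
        - d m * B := by rw [← key]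
    _ = ∑ j ∈ Finset.range n, (d j - d (j + 1)) * ((m + n - j - 1).choose (n - j - 1) : ℝ)
        + (1 - d m) * B := by ring
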